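/- Let X be a real Gaussian random variable with mean μ and variance σ² (σ > 0) conditioned to lie in the interval [a, b] with a < b (a truncated Gaussian). With α = (a−μ)/σ, β = (b−μ)/σ, φ the standard normal density, Φ the standard normal CDF, and Z = Φ(β) − Φ(α), the fourth non-central moment of X equals E[X⁴] = μ⁴ + 4σμ³(φ(α) − φ(β))/Z + 6σ²μ²(1 + (αφ(α) − βφ(β))/Z) + 4σ³μ((α²+2)φ(α) − (β²+2)φ(β))/Z + σ⁴(3 + ((α³+3α)φ(α) − (β³+3β)φ(β))/Z). -/

import Mathlib

open MeasureTheory ProbabilityTheory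
open scoped NNReal ENNReal
open Real

noncomputable section

/-- The truncated Gaussian distribution `N_T(m, σ²)` on `[a, b]`: a real Gaussian with mean `m`
and variance `σ²` conditioned on the event of lying in the interval `[a, b]`. -/
def truncGauss (m σ a b : ℝ) : Measure ℝ :=
  ProbabilityTheory.cond (gaussianReal m ⟨σ ^ 2, sq_nonneg σ⟩) (Set.Icc a b)


noncomputable def phi0 (t : ℝ) : ℝ := Real.exp (-t ^ 2 / 2) / Real.sqrt (2 * Real.pi)

lemma phi0_cont : Continuous phi0 := by
  unfold phi0; fun_prop

lemma phi0_pos (t : ℝ) : 0 < phi0 t := by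
  unfold phi0
  positivity

lemma phi0_hasDeriv (x : ℝ) : HasDerivAt phi0 (-x * phi0 x) x := by
  have h1 : HasDerivAt (fun t : ℝ => -t ^ 2 / 2) (-x) x := by
    have := ((hasDerivAt_pow 2 x).neg.div_const 2)
    refine this.congr_deriv ?_
    push_cast; ring
  have h2 := (h1.exp).div_const (Real.sqrt (2 * Real.pi))
  refine h2.congr_deriv ?_
  unfold phi0; ring

lemma gauss_Icc_integral (m σ : ℝ) (hσ : 0 < σ) (a b : ℝ) (hab : a ≤ b) (f : ℝ → ℝ) :
    ∫ x in Set.Icc a b, f x ∂(gaussianReal m ⟨σ ^ 2, sq_nonneg σ⟩) =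
      ∫ t in ((a - m) / σ)..((b - m) / σ), phi0 t * f (σ * t + m) := by
  set v : ℝ≥0 := ⟨σ ^ 2, sq_nonneg σ⟩ with hv_def
  have hvco : (v : ℝ) = σ ^ 2 := rfl
  have hv : v ≠ 0 := by
    intro h
    have : (v : ℝ) = 0 := by rw [h]; simp
    rw [hvco] at this
    exact (pow_pos hσ 2).ne' this
  rw [gaussianReal_of_var_ne_zero _ hv]
  have hpdf_eq : gaussianPDF m v = fun x => ((gaussianPDFReal m v x).toNNReal : ℝ≥0∞) := rfl
  rw [hpdf_eq, setIntegral_withDensity_eq_setIntegral_smul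
    ((measurable_gaussianPDFReal m v).real_toNNReal) f measurableSet_Icc]
  have hsmul : ∀ x, ((gaussianPDFReal m v x).toNNReal : ℝ≥0) • f x = gaussianPDFReal m v x * f x := by
    intro x
    rw [NNReal.smul_def, Real.coe_toNNReal _ (gaussianPDFReal_nonneg _ _ _), smul_eq_mul]
  simp only [hsmul]
  rw [MeasureTheory.integral_Icc_eq_integral_Ioc, ← intervalIntegral.integral_of_le hab]
  have ha' : σ * ((a - m) / σ) + m = a := by field_simp; ring
  have hb' : σ * ((b - m) / σ) + m = b := by field_simp; ring
  have hsub := intervalIntegral.smul_integral_comp_mul_add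
    (f := fun x => gaussianPDFReal m v x * f x) (a := (a - m) / σ) (b := (b - m) / σ) σ m
  rw [ha', hb'] at hsub
  rw [← hsub, smul_eq_mul, ← intervalIntegral.integral_const_mul]
  apply intervalIntegral.integral_congr
  intro t _
  have hpdf : gaussianPDFReal m v (σ * t + m) = (Real.sqrt (2 * Real.pi) * σ)⁻¹ * Real.exp (-t ^ 2 / 2) := by
    rw [gaussianPDFReal]
    have h1 : 2 * Real.pi * (v : ℝ) = (2 * Real.pi) * σ ^ 2 := by rw [hvco]
    rw [h1, Real.sqrt_mul (by positivity) (σ ^ 2), Real.sqrt_sq hσ.le]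
    congr 1
    have : σ * t + m - m = σ * t := by ring
    rw [this, hvco]
    congr 1
    field_simp
  simp only [hpdf]
  unfold phi0
  field_simp

lemma phi0_integrable : Integrable phi0 := by
  have h : phi0 = fun t => Real.exp (-(1 / 2 : ℝ) * t ^ 2) / Real.sqrt (2 * Real.pi) := by
    funext t; unfold phi0; congr 1; ring
  rw [h]
  exact (integrable_exp_neg_mul_sq (by norm_num)).div_const _

lemma hd1 (x : ℝ) : HasDerivAt (fun t => -phi0 t) (x * phi0 x) x := by
  refine (phi0_hasDeriv x).neg.congr_deriv ?_; ring

lemma hd2 (x : ℝ) : HasDerivAt (fun t => -t * phi0 t) ((x ^ 2 - 1) * phi0 x) x := by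
  refine ((hasDerivAt_id x).neg.mul (phi0_hasDeriv x)).congr_deriv ?_; simp; ring

lemma hd3 (x : ℝ) : HasDerivAt (fun t => -(t ^ 2 + 2) * phi0 t) (x ^ 3 * phi0 x) x := by
  have hp : HasDerivAt (fun t : ℝ => -(t ^ 2 + 2)) (-(2 * x)) x := by
    have := ((hasDerivAt_pow 2 x).add_const 2).neg
    refine this.congr_deriv ?_; push_cast; ring
  refine (hp.mul (phi0_hasDeriv x)).congr_deriv ?_; ring

lemma hd4 (x : ℝ) : HasDerivAt (fun t => -(t ^ 3 + 3 * t) * phi0 t) ((x ^ 4 - 3) * phi0 x) x := by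
  have hp : HasDerivAt (fun t : ℝ => -(t ^ 3 + 3 * t)) (-(3 * x ^ 2 + 3)) x := by
    have := ((hasDerivAt_pow 3 x).add ((hasDerivAt_id x).const_mul 3)).neg
    refine this.congr_deriv ?_; push_cast; ring
  refine (hp.mul (phi0_hasDeriv x)).congr_deriv ?_; ring

lemma contk (k : ℕ) : Continuous (fun t : ℝ => t ^ k * phi0 t) :=
  (continuous_pow k).mul phi0_cont

lemma J1 (α β : ℝ) : ∫ t in α..β, t * phi0 t = phi0 α - phi0 β := by
  have := intervalIntegral.integral_eq_sub_of_hasDerivAt (f := fun t => -phi0 t)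
    (fun x _ => hd1 x) ((continuous_id.mul phi0_cont).intervalIntegrable α β)
  rw [this]; ring

lemma J3 (α β : ℝ) : ∫ t in α..β, t ^ 3 * phi0 t = (α ^ 2 + 2) * phi0 α - (β ^ 2 + 2) * phi0 β := by
  have := intervalIntegral.integral_eq_sub_of_hasDerivAt (f := fun t => -(t ^ 2 + 2) * phi0 t)
    (fun x _ => hd3 x) ((contk 3).intervalIntegrable α β)
  rw [this]; ring

lemma J2 (α β : ℝ) : ∫ t in α..β, t ^ 2 * phi0 t =
    (∫ t in α..β, phi0 t) + (α * phi0 α - β * phi0 β) := by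
  have hcongr : ∀ t : ℝ, t ^ 2 * phi0 t = (t ^ 2 - 1) * phi0 t + phi0 t := by intro t; ring
  have h1 : Continuous (fun t : ℝ => (t ^ 2 - 1) * phi0 t) :=
    (((continuous_pow 2).sub continuous_const).mul phi0_cont)
  rw [show (fun t : ℝ => t ^ 2 * phi0 t) = fun t => (t ^ 2 - 1) * phi0 t + phi0 t from funext hcongr]
  rw [intervalIntegral.integral_add (h1.intervalIntegrable α β) (phi0_cont.intervalIntegrable α β)]
  have := intervalIntegral.integral_eq_sub_of_hasDerivAt (f := fun t => -t * phi0 t)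
    (fun x _ => hd2 x) (h1.intervalIntegrable α β)
  rw [this]; ring

lemma J4 (α β : ℝ) : ∫ t in α..β, t ^ 4 * phi0 t =
    3 * (∫ t in α..β, phi0 t) + ((α ^ 3 + 3 * α) * phi0 α - (β ^ 3 + 3 * β) * phi0 β) := by
  have hcongr : ∀ t : ℝ, t ^ 4 * phi0 t = (t ^ 4 - 3) * phi0 t + 3 * phi0 t := by intro t; ring
  have h1 : Continuous (fun t : ℝ => (t ^ 4 - 3) * phi0 t) :=
    (((continuous_pow 4).sub continuous_const).mul phi0_cont)
  have h2 : Continuous (fun t : ℝ => 3 * phi0 t) := continuous_const.mul phi0_cont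
  rw [show (fun t : ℝ => t ^ 4 * phi0 t) = fun t => (t ^ 4 - 3) * phi0 t + 3 * phi0 t from funext hcongr]
  rw [intervalIntegral.integral_add (h1.intervalIntegrable α β) (h2.intervalIntegrable α β)]
  have := intervalIntegral.integral_eq_sub_of_hasDerivAt (f := fun t => -(t ^ 3 + 3 * t) * phi0 t)
    (fun x _ => hd4 x) (h1.intervalIntegrable α β)
  rw [this, intervalIntegral.integral_const_mul]; ring

lemma Jsum (α β m σ : ℝ) : ∫ t in α..β, phi0 t * (σ * t + m) ^ 4 =
    m ^ 4 * (∫ t in α..β, phi0 t) + 4 * m ^ 3 * σ * (phi0 α - phi0 β)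
    + 6 * m ^ 2 * σ ^ 2 * ((∫ t in α..β, phi0 t) + (α * phi0 α - β * phi0 β))
    + 4 * m * σ ^ 3 * ((α ^ 2 + 2) * phi0 α - (β ^ 2 + 2) * phi0 β)
    + σ ^ 4 * (3 * (∫ t in α..β, phi0 t)
        + ((α ^ 3 + 3 * α) * phi0 α - (β ^ 3 + 3 * β) * phi0 β)) := by
  have he : ∀ t : ℝ, phi0 t * (σ * t + m) ^ 4 =
      m ^ 4 * phi0 t + 4 * m ^ 3 * σ * (t ^ 1 * phi0 t) + 6 * m ^ 2 * σ ^ 2 * (t ^ 2 * phi0 t)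
        + 4 * m * σ ^ 3 * (t ^ 3 * phi0 t) + σ ^ 4 * (t ^ 4 * phi0 t) := fun t => by ring
  rw [show (fun t => phi0 t * (σ * t + m) ^ 4) = fun t =>
      m ^ 4 * phi0 t + 4 * m ^ 3 * σ * (t ^ 1 * phi0 t) + 6 * m ^ 2 * σ ^ 2 * (t ^ 2 * phi0 t)
        + 4 * m * σ ^ 3 * (t ^ 3 * phi0 t) + σ ^ 4 * (t ^ 4 * phi0 t) from funext he]
  have i0 : IntervalIntegrable (fun t => m ^ 4 * phi0 t) volume α β := ((continuous_const (y := m ^ 4)).mul phi0_cont).intervalIntegrable (μ := volume) α β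
  have i1 : IntervalIntegrable (fun t => 4 * m ^ 3 * σ * (t ^ 1 * phi0 t)) volume α β := ((continuous_const (y := 4 * m ^ 3 * σ)).mul (contk 1)).intervalIntegrable (μ := volume) α β
  have i2 : IntervalIntegrable (fun t => 6 * m ^ 2 * σ ^ 2 * (t ^ 2 * phi0 t)) volume α β := ((continuous_const (y := 6 * m ^ 2 * σ ^ 2)).mul (contk 2)).intervalIntegrable (μ := volume) α β
  have i3 : IntervalIntegrable (fun t => 4 * m * σ ^ 3 * (t ^ 3 * phi0 t)) volume α β := ((continuous_const (y := 4 * m * σ ^ 3)).mul (contk 3)).intervalIntegrable (μ := volume) α β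
  have i4 : IntervalIntegrable (fun t => σ ^ 4 * (t ^ 4 * phi0 t)) volume α β := ((continuous_const (y := σ ^ 4)).mul (contk 4)).intervalIntegrable (μ := volume) α β
  rw [intervalIntegral.integral_add (((i0.add i1).add i2).add i3) i4,
    intervalIntegral.integral_add ((i0.add i1).add i2) i3,
    intervalIntegral.integral_add (i0.add i1) i2,
    intervalIntegral.integral_add i0 i1]
  simp only [intervalIntegral.integral_const_mul, pow_one]
  rw [J1 α β, J2 α β, J3 α β, J4 α β]


/-- The fourth non-central moment of a truncated Gaussian random variable. -/
theorem truncated_gaussian_fourth_moment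
    {Ω : Type*} [MeasurableSpace Ω] (P : Measure Ω) [IsProbabilityMeasure P]
    (X : Ω → ℝ) (m σ a b : ℝ) (hσ : 0 < σ) (hab : a < b)
    (hX : Measure.map X P = truncGauss m σ a b)
    (φ : ℝ → ℝ) (hφ : φ = fun x => Real.exp (-x ^ 2 / 2) / Real.sqrt (2 * Real.pi))
    (Φ : ℝ → ℝ) (hΦ : ∀ x, Φ x = ∫ t in Set.Iic x, φ t)
    (α β Z : ℝ) (hα : α = (a - m) / σ) (hβ : β = (b - m) / σ) (hZ : Z = Φ β - Φ α) :
    ∫ ω, X ω ^ 4 ∂P =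
      m ^ 4 + 4 * σ * m ^ 3 * ((φ α - φ β) / Z)
        + 6 * σ ^ 2 * m ^ 2 * (1 + (α * φ α - β * φ β) / Z)
        + 4 * σ ^ 3 * m * (((α ^ 2 + 2) * φ α - (β ^ 2 + 2) * φ β) / Z)
        + σ ^ 4 * (3 + ((α ^ 3 + 3 * α) * φ α - (β ^ 3 + 3 * β) * φ β) / Z) := by
  rw [truncGauss] at hX
  have hφeq : φ = phi0 := by rw [hφ]; rfl
  set g := gaussianReal m ⟨σ ^ 2, sq_nonneg σ⟩ with hg_def
  set s := Set.Icc a b with hs_def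
  have hαβ : α < β := by
    rw [hα, hβ]
    exact div_lt_div_of_pos_right (by linarith) hσ
  -- Z as interval integral
  have hZint : Z = ∫ t in α..β, phi0 t := by
    rw [hZ, hΦ, hΦ, hφeq]
    exact intervalIntegral.integral_Iic_sub_Iic phi0_integrable.integrableOn phi0_integrable.integrableOn
  have hZpos : 0 < Z := by
    rw [hZint]
    exact intervalIntegral.intervalIntegral_pos_of_pos
      (phi0_cont.intervalIntegrable α β) (fun x => phi0_pos x) hαβ
  -- total mass of the gaussian on [a,b]
  have hmass : (g s).toReal = Z := by
    have h1 : ∫ x in s, (1 : ℝ) ∂g = (g s).toReal • (1 : ℝ) := setIntegral_const 1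
    have h2 := gauss_Icc_integral m σ hσ a b hab.le (fun _ => (1 : ℝ))
    rw [← hα, ← hβ] at h2
    rw [← hs_def] at h2
    rw [h2] at h1
    simp only [mul_one, smul_eq_mul] at h1
    rw [← hZint] at h1
    linarith
  have hg0 : g s ≠ 0 := by
    intro h
    rw [h] at hmass
    simp at hmass
    exact hZpos.ne' hmass.symm
  haveI : IsProbabilityMeasure g := instIsProbabilityMeasureGaussianReal _ _
  have hgt : g s ≠ ⊤ := measure_ne_top _ _
  -- X is a.e.-measurable
  have hprob : IsProbabilityMeasure (ProbabilityTheory.cond g s) :=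
    cond_isProbabilityMeasure hg0
  have hXm : AEMeasurable X P := by
    by_contra h
    rw [Measure.map_of_not_aemeasurable h] at hX
    have h1 : (ProbabilityTheory.cond g s) Set.univ = 1 := hprob.measure_univ
    rw [← hX] at h1
    simp at h1
  -- push to the truncated gaussian
  rw [← integral_map hXm (by fun_prop : AEStronglyMeasurable (fun x : ℝ => x ^ 4) _), hX]
  rw [ProbabilityTheory.cond, integral_smul_measure]
  have h4 := gauss_Icc_integral m σ hσ a b hab.le (fun x => x ^ 4)
  rw [← hα, ← hβ, ← hs_def, ← hg_def] at h4
  rw [h4, Jsum, ← hZint, ENNReal.toReal_inv, hmass, smul_eq_mul, hφeq]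
  field_simp
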